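/- Let E be a finite-dimensional real inner product space and let A, B be subspaces of E, with C := A ⊓ B. Then the orthogonal complement of the meet inside the join decomposes as (A ⊔ B) ⊓ Cᗮ = (A ⊓ Cᗮ) ⊔ (B ⊓ Cᗮ). Equivalently, every vector x in the join A ⊔ B that is orthogonal to every vector of C can be written as x = a₀ + b₀ where a₀ ∈ A is orthogonal to C and b₀ ∈ B is orthogonal to C, and conversely every such sum lies in (A ⊔ B) ⊓ Cᗮ. -/

import Mathlib

/-- The orthogonal complement of the meet inside the join decomposes as
`(A ⊔ B) ⊓ (A ⊓ B)ᗮ = (A ⊓ (A ⊓ B)ᗮ) ⊔ (B ⊓ (A ⊓ B)ᗮ)`. -/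
theorem symmDiff_decomposition
    (E : Type*) [NormedAddCommGroup E] [InnerProductSpace ℝ E] [FiniteDimensional ℝ E]
    (A B : Submodule ℝ E) :
    (A ⊔ B) ⊓ (A ⊓ B)ᗮ = (A ⊓ (A ⊓ B)ᗮ) ⊔ (B ⊓ (A ⊓ B)ᗮ) := by
  set C := A ⊓ B with hC
  apply le_antisymm
  · rintro x ⟨hxAB, hxC⟩
    obtain ⟨a, ha, b, hb, rfl⟩ := Submodule.mem_sup.mp hxAB
    have hA : C ⊔ Cᗮ ⊓ A = A := Submodule.sup_orthogonal_inf_of_hasOrthogonalProjection inf_le_left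
    have hB : C ⊔ Cᗮ ⊓ B = B := Submodule.sup_orthogonal_inf_of_hasOrthogonalProjection inf_le_right
    rw [← hA, Submodule.mem_sup] at ha
    rw [← hB, Submodule.mem_sup] at hb
    obtain ⟨c1, hc1, a0, ha0, rfl⟩ := ha
    obtain ⟨c2, hc2, b0, hb0, rfl⟩ := hb
    have hsum : c1 + c2 ∈ C ⊓ Cᗮ := by
      constructor
      · exact C.add_mem hc1 hc2
      · have : c1 + c2 = (c1 + a0 + (c2 + b0)) - (a0 + b0) := by abel
        rw [this]
        exact Cᗮ.sub_mem hxC (Cᗮ.add_mem ha0.1 hb0.1)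
    rw [Submodule.inf_orthogonal_eq_bot C, Submodule.mem_bot] at hsum
    have hx : c1 + a0 + (c2 + b0) = a0 + b0 := by
      have : c1 + a0 + (c2 + b0) = (c1 + c2) + (a0 + b0) := by abel
      rw [this, hsum, zero_add]
    rw [hx]
    exact Submodule.add_mem_sup ⟨ha0.2, ha0.1⟩ ⟨hb0.2, hb0.1⟩
  · exact sup_le (inf_le_inf_right _ le_sup_left) (inf_le_inf_right _ le_sup_right)
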